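/- Let q ≥ 2 be real, let t ∈ ℝ^m have nonnegative entries, set r_e = t_e^{q−2} for each e, and define h_q(r,Δ) = 2∑_{e=1}^m r_e Δ_e² + ‖Δ‖_q^q. Then for every Δ ∈ ℝ^m, (1/q)·γ_q(t,Δ) ≤ h_q(r,Δ) ≤ 3·γ_q(t,Δ). -/

import Mathlib

/-- The per-coordinate smoothed power function
`γ_q(t,x) = (q/2)t^{q−2}x²` if `|x| ≤ t`, and `|x|^q + (q/2 − 1)t^q` otherwise. -/
noncomputable def gam (q t x : ℝ) : ℝ :=
  if |x| ≤ t then q / 2 * t ^ (q - 2) * x ^ 2 else |x| ^ q + (q / 2 - 1) * t ^ q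

lemma rpow_split {a : ℝ} (ha : 0 ≤ a) {q : ℝ} (hq : 0 < q) :
    a ^ q = a ^ (q - 2) * a ^ 2 := by
  rcases eq_or_lt_of_le ha with h0 | h0
  · simp [← h0, Real.zero_rpow hq.ne']
  · rw [show a ^ 2 = a ^ (2 : ℝ) by rw [← Real.rpow_natCast a 2]; norm_num,
      ← Real.rpow_add h0]
    ring_nf

lemma pt {q t : ℝ} (hq : 2 ≤ q) (ht : 0 ≤ t) (x : ℝ) :
    1 / q * gam q t x ≤ 2 * (t ^ (q - 2) * x ^ 2) + |x| ^ q ∧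
    2 * (t ^ (q - 2) * x ^ 2) + |x| ^ q ≤ 3 * gam q t x := by
  have hq0 : (0 : ℝ) < q := by linarith
  have htq2 : 0 ≤ t ^ (q - 2) := Real.rpow_nonneg ht _
  have hax : 0 ≤ |x| := abs_nonneg x
  have haxq : 0 ≤ |x| ^ q := Real.rpow_nonneg hax _
  have hA : 0 ≤ t ^ (q - 2) * x ^ 2 := mul_nonneg htq2 (sq_nonneg x)
  have hsplit : |x| ^ q = |x| ^ (q - 2) * x ^ 2 := by
    rw [rpow_split hax hq0, sq_abs]
  unfold gam
  split_ifs with h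
  · -- |x| ≤ t
    have hkey : |x| ^ q ≤ t ^ (q - 2) * x ^ 2 := by
      rw [hsplit]
      exact mul_le_mul_of_nonneg_right
        (Real.rpow_le_rpow hax h (by linarith)) (sq_nonneg x)
    constructor
    · have heq : 1 / q * (q / 2 * t ^ (q - 2) * x ^ 2) = t ^ (q - 2) * x ^ 2 / 2 := by
        field_simp
      rw [heq]; linarith
    · nlinarith
  · -- t < |x|
    push_neg at h
    have htx : t ^ (q - 2) * x ^ 2 ≤ |x| ^ q := by
      rw [hsplit]
      exact mul_le_mul_of_nonneg_right
        (Real.rpow_le_rpow ht h.le (by linarith)) (sq_nonneg x)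
    have htq : 0 ≤ t ^ q := Real.rpow_nonneg ht _
    have htqA : t ^ q ≤ t ^ (q - 2) * x ^ 2 := by
      rw [rpow_split ht hq0]
      refine mul_le_mul_of_nonneg_left ?_ htq2
      nlinarith [abs_nonneg x, sq_abs x]
    constructor
    · rw [one_div, inv_mul_le_iff₀ hq0]
      nlinarith
    · nlinarith

/-- Lemma C.1, res-gamma. -/
theorem stmt_12 {m : ℕ} {q : ℝ} (hq : 2 ≤ q) (t : Fin m → ℝ) (ht : ∀ e, 0 ≤ t e)
    (r : Fin m → ℝ) (hr : ∀ e, r e = t e ^ (q - 2)) (Δ : Fin m → ℝ) :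
    1 / q * (∑ e, gam q (t e) (Δ e))
        ≤ 2 * (∑ e, r e * Δ e ^ 2) + (∑ e, |Δ e| ^ q) ∧
      2 * (∑ e, r e * Δ e ^ 2) + (∑ e, |Δ e| ^ q)
        ≤ 3 * ∑ e, gam q (t e) (Δ e) := by
  have h := fun e => pt hq (ht e) (Δ e)
  constructor
  · rw [Finset.mul_sum]
    calc ∑ e, 1 / q * gam q (t e) (Δ e)
        ≤ ∑ e, (2 * (r e * Δ e ^ 2) + |Δ e| ^ q) := by
          refine Finset.sum_le_sum fun e _ => ?_
          rw [hr e]; exact (h e).1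
      _ = 2 * (∑ e, r e * Δ e ^ 2) + (∑ e, |Δ e| ^ q) := by
          rw [Finset.sum_add_distrib, Finset.mul_sum]
  · calc 2 * (∑ e, r e * Δ e ^ 2) + (∑ e, |Δ e| ^ q)
        = ∑ e, (2 * (r e * Δ e ^ 2) + |Δ e| ^ q) := by
          rw [Finset.sum_add_distrib, Finset.mul_sum]
      _ ≤ ∑ e, 3 * gam q (t e) (Δ e) := by
          refine Finset.sum_le_sum fun e _ => ?_
          rw [hr e]; exact (h e).2
      _ = 3 * ∑ e, gam q (t e) (Δ e) := (Finset.mul_sum _ _ _).symm
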